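/- Let E be a row-finite directed graph, let t ≥ 0 be an integer, and let v be a vertex of E. Then the set E^t_v := {λ ∈ E^t : s(λ) = v} is finite, and Σ_{λ ∈ E^t_v} 1/n_λ = 1 (an identity of rational numbers). -/

import Mathlib

/-- A directed graph with vertex set `V` and edge set `E`. -/
structure DirGraph (V E : Type) where
  src : E → V
  rng : E → V

namespace DirGraph

variable {V E : Type}

/-- A vertex is a sink if no edge emanates from it. -/
def IsSink (G : DirGraph V E) (v : V) : Prop := ∀ e : E, G.src e ≠ v

/-- A graph is row-finite if every vertex emits only finitely many edges. -/
def RowFinite (G : DirGraph V E) : Prop := ∀ v : V, {e : E | G.src e = v}.Finite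

/-- `G.ChainFrom v l` : the list of edges `l` forms a path starting at the vertex `v`. -/
def ChainFrom (G : DirGraph V E) : V → List E → Prop
  | _, [] => True
  | v, e :: es => G.src e = v ∧ G.ChainFrom (G.rng e) es

@[simp] theorem chainFrom_nil (G : DirGraph V E) (v : V) : G.ChainFrom v [] ↔ True := Iff.rfl

@[simp] theorem chainFrom_cons (G : DirGraph V E) (v : V) (e : E) (es : List E) :
    G.ChainFrom v (e :: es) ↔ G.src e = v ∧ G.ChainFrom (G.rng e) es := Iff.rfl

/-- A finite path in `G`: a starting vertex together with a compatible list of edges.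
(Paths of length `0` are identified with their starting vertex.) -/
structure GPath (G : DirGraph V E) where
  start : V
  edges : List E
  ok : G.ChainFrom start edges

namespace GPath

variable {G : DirGraph V E}

/-- The range (terminal vertex) of a path. -/
def range (p : GPath G) : V := (p.edges.getLast?.map G.rng).getD p.start

/-- `n_λ = ∏_{i=1}^{|λ|} |s⁻¹(s(e_i))|` for a path `λ = e₁⋯e_k`; equals `1` for paths of
length zero. -/
noncomputable def nval (p : GPath G) : ℕ :=
  (p.edges.map (fun e => {f : E | G.src f = G.src e}.ncard)).prod

end GPath

/-- Membership in `E^t`: paths of length exactly `t`, together with the paths of length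
`< t` whose range is a sink. -/
def MemE (G : DirGraph V E) (t : ℕ) (p : GPath G) : Prop :=
  p.edges.length = t ∨ (p.edges.length < t ∧ G.IsSink p.range)

/-- The set `E^t` of paths of length `t` together with shorter paths ending in a sink. -/
def EtP (G : DirGraph V E) (t : ℕ) : Type _ := {p : GPath G // G.MemE t p}



variable {V E : Type}

theorem GPath_ext' {G : DirGraph V E} {p q : GPath G}
    (h1 : p.start = q.start) (h2 : p.edges = q.edges) : p = q := by
  cases p; cases q
  cases h1; cases h2
  rfl

theorem range_aux (G : DirGraph V E) (e : E) (l : List E) (w : V) :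
    (((e :: l).getLast?).map G.rng).getD w = ((l.getLast?).map G.rng).getD (G.rng e) := by
  cases l with
  | nil => simp
  | cons a l =>
    rw [List.getLast?_cons_cons]
    obtain ⟨x, hx⟩ : ∃ x, (a :: l).getLast? = some x := by
      cases h : (a :: l).getLast? with
      | none => exact absurd h (by simp)
      | some x => exact ⟨x, rfl⟩
    rw [hx]
    simp

open Classical in
/-- cons an edge onto a path, provided it is compatible; otherwise identity. -/
noncomputable def consP (G : DirGraph V E) (e : E) (p : GPath G) : GPath G :=
  if h : p.start = G.rng e then ⟨G.src e, e :: p.edges, rfl, h ▸ p.ok⟩ else p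

theorem consP_eq (G : DirGraph V E) (e : E) (q : GPath G) (h : q.start = G.rng e) :
    G.consP e q = ⟨G.src e, e :: q.edges, rfl, h ▸ q.ok⟩ := dif_pos h

theorem range_consP (G : DirGraph V E) (e : E) (q : GPath G) (h : q.start = G.rng e) :
    (G.consP e q).range = q.range := by
  rw [consP_eq G e q h]
  show (((e :: q.edges).getLast?).map G.rng).getD (G.src e) = _
  rw [range_aux, ← h]
  rfl

theorem nval_consP (G : DirGraph V E) (e : E) (q : GPath G) (h : q.start = G.rng e) :
    (G.consP e q).nval = {f : E | G.src f = G.src e}.ncard * q.nval := by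
  rw [consP_eq G e q h]
  simp [GPath.nval]

theorem key (G : DirGraph V E) (hG : G.RowFinite) :
    ∀ t : ℕ, ∀ v : V, ∃ s : Finset (GPath G),
      (∀ p : GPath G, p ∈ s ↔ G.MemE t p ∧ p.start = v) ∧
      ∑ p ∈ s, (1 : ℚ) / (p.nval : ℚ) = 1 := by
  classical
  intro t
  induction t with
  | zero =>
    intro v
    refine ⟨{⟨v, [], trivial⟩}, ?_, ?_⟩
    · intro p
      constructor
      · rintro hp
        simp only [Finset.mem_singleton] at hp
        subst hp
        exact ⟨Or.inl rfl, rfl⟩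
      · rintro ⟨hmem, hst⟩
        rcases hmem with h | h
        · have : p.edges = [] := List.length_eq_zero_iff.mp h
          simp only [Finset.mem_singleton]
          exact GPath_ext' hst this
        · omega
    · simp [GPath.nval]
  | succ t ih =>
    intro v
    by_cases hv : G.IsSink v
    · refine ⟨{⟨v, [], trivial⟩}, ?_, ?_⟩
      · intro p
        constructor
        · rintro hp
          simp only [Finset.mem_singleton] at hp
          subst hp
          refine ⟨Or.inr ⟨by simp, ?_⟩, rfl⟩
          simpa [GPath.range] using hv
        · rintro ⟨hmem, hst⟩
          have hnil : p.edges = [] := by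
            cases hpe : p.edges with
            | nil => rfl
            | cons e es =>
              have := p.ok
              rw [hpe] at this
              exact absurd (this.1.trans hst) (hv e)
          simp only [Finset.mem_singleton]
          exact GPath_ext' hst hnil
      · simp [GPath.nval]
    · -- v is not a sink
      choose S hSmem hSsum using ih
      obtain ⟨e0, he0⟩ : ∃ e : E, G.src e = v := by
        by_contra h
        push_neg at h
        exact hv h
      set F : Finset E := (hG v).toFinset with hF
      have hFmem : ∀ e, e ∈ F ↔ G.src e = v := by
        intro e; simp [hF, (hG v).mem_toFinset]
      refine ⟨F.biUnion (fun e => (S (G.rng e)).image (G.consP e)), ?_, ?_⟩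
      · intro p
        simp only [Finset.mem_biUnion, Finset.mem_image]
        constructor
        · rintro ⟨e, heF, q, hq, rfl⟩
          have hstart : q.start = G.rng e := ((hSmem (G.rng e) q).mp hq).2
          have hqmem : G.MemE t q := ((hSmem (G.rng e) q).mp hq).1
          rw [consP_eq G e q hstart]
          refine ⟨?_, (hFmem e).mp heF⟩
          rcases hqmem with h | ⟨h1, h2⟩
          · exact Or.inl (by simp [h])
          · refine Or.inr ⟨by simp; omega, ?_⟩
            have : GPath.range ⟨G.src e, e :: q.edges, rfl, hstart ▸ q.ok⟩
                = (G.consP e q).range := by rw [consP_eq G e q hstart]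
            rw [this, range_consP G e q hstart]
            exact h2
        · rintro ⟨hmem, hst⟩
          cases hpe : p.edges with
          | nil =>
            exfalso
            rcases hmem with h | ⟨h1, h2⟩
            · rw [hpe] at h; simp at h
            · apply hv
              have : p.range = p.start := by simp [GPath.range, hpe]
              rw [this, hst] at h2
              exact h2
          | cons e es =>
            have hok := p.ok
            rw [hpe] at hok
            have hpeq : p = G.consP e ⟨G.rng e, es, hok.2⟩ := by
              rw [consP_eq G e _ rfl]
              exact GPath_ext' hok.1.symm hpe
            refine ⟨e, (hFmem e).mpr (hok.1.trans hst), ⟨G.rng e, es, hok.2⟩, ?_, hpeq.symm⟩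
            rw [hSmem]
            refine ⟨?_, rfl⟩
            rcases hmem with h | ⟨h1, h2⟩
            · rw [hpe] at h
              simp only [List.length_cons] at h
              exact Or.inl (by show es.length = t; omega)
            · rw [hpe] at h1
              simp only [List.length_cons] at h1
              refine Or.inr ⟨by show es.length < t; omega, ?_⟩
              rw [hpeq, range_consP G e _ rfl] at h2
              exact h2
      · -- the sum
        have hdisj : ∀ e₁ ∈ F, ∀ e₂ ∈ F, e₁ ≠ e₂ →
            Disjoint ((S (G.rng e₁)).image (G.consP e₁)) ((S (G.rng e₂)).image (G.consP e₂)) := by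
          intro e₁ h1 e₂ h2 hne
          rw [Finset.disjoint_left]
          rintro p hp1 hp2
          simp only [Finset.mem_image] at hp1 hp2
          obtain ⟨q1, hq1, hpe1⟩ := hp1
          obtain ⟨q2, hq2, hpe2⟩ := hp2
          have hs1 : q1.start = G.rng e₁ := ((hSmem _ _).mp hq1).2
          have hs2 : q2.start = G.rng e₂ := ((hSmem _ _).mp hq2).2
          have h1' : p.edges = e₁ :: q1.edges := by rw [← hpe1, consP_eq G e₁ q1 hs1]
          have h2' : p.edges = e₂ :: q2.edges := by rw [← hpe2, consP_eq G e₂ q2 hs2]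
          rw [h1'] at h2'
          exact hne (List.head_eq_of_cons_eq h2')
        rw [Finset.sum_biUnion hdisj]
        have hn : ({f : E | G.src f = v}).ncard = F.card := by
          rw [hF]
          exact Set.ncard_eq_toFinset_card _ (hG v)
        set n : ℕ := ({f : E | G.src f = v}).ncard with hn'
        have hnpos : 0 < n := by
          rw [hn]
          exact Finset.card_pos.mpr ⟨e0, (hFmem e0).mpr he0⟩
        have hinner : ∀ e ∈ F, ∑ p ∈ (S (G.rng e)).image (G.consP e), (1 : ℚ) / (p.nval : ℚ)
            = 1 / (n : ℚ) := by
          intro e heF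
          rw [Finset.sum_image]
          · have hev : G.src e = v := (hFmem e).mp heF
            have hterm : ∀ q ∈ S (G.rng e), (1 : ℚ) / ((G.consP e q).nval : ℚ)
                = (1 / (n : ℚ)) * (1 / (q.nval : ℚ)) := by
              intro q hq
              have hs : q.start = G.rng e := ((hSmem _ _).mp hq).2
              rw [nval_consP G e q hs, hev, ← hn']
              push_cast
              rw [div_mul_div_comm, one_mul]
            rw [Finset.sum_congr rfl hterm, ← Finset.mul_sum, hSsum, mul_one]
          · intro q1 hq1 q2 hq2 heq
            have hs1 : q1.start = G.rng e := ((hSmem _ _).mp hq1).2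
            have hs2 : q2.start = G.rng e := ((hSmem _ _).mp hq2).2
            rw [consP_eq G e q1 hs1, consP_eq G e q2 hs2] at heq
            exact GPath_ext' (hs1.trans hs2.symm) (List.tail_eq_of_cons_eq (congrArg GPath.edges heq))
        rw [Finset.sum_congr rfl hinner, Finset.sum_const, ← hn]
        rw [nsmul_eq_mul]
        field_simp

end DirGraph

open DirGraph

/-- For a row-finite graph `E`, an integer `t ≥ 0` and a vertex `v`, the set
`E^t_v = {λ ∈ E^t : s(λ) = v}` is finite and `Σ_{λ ∈ E^t_v} 1/n_λ = 1` in `ℚ`. -/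
theorem Et_source_finite_and_sum_inv_nval_eq_one {V E : Type} (G : DirGraph V E)
    (hG : G.RowFinite) (t : ℕ) (v : V) :
    {p : G.EtP t | p.1.start = v}.Finite ∧
      ∑ᶠ p ∈ {p : G.EtP t | p.1.start = v}, (1 : ℚ) / ((p : G.EtP t).1.nval : ℚ) = 1 := by
  classical
  obtain ⟨s, hmem, hsum⟩ := key G hG t v
  have hinj : Set.InjOn (Subtype.val : G.EtP t → GPath G) {p : G.EtP t | p.1.start = v} :=
    fun a _ b _ h => Subtype.ext h
  have himg : (Subtype.val : G.EtP t → GPath G) '' {p : G.EtP t | p.1.start = v} = ↑s := by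
    ext q
    simp only [Set.mem_image, Set.mem_setOf_eq, Finset.coe_sort_coe, Finset.mem_coe, hmem]
    constructor
    · rintro ⟨⟨p, hp⟩, h1, rfl⟩
      exact ⟨hp, h1⟩
    · rintro ⟨h1, h2⟩
      exact ⟨⟨q, h1⟩, h2, rfl⟩
  constructor
  · apply Set.Finite.of_finite_image _ hinj
    rw [himg]
    exact s.finite_toSet
  · calc ∑ᶠ p ∈ {p : G.EtP t | p.1.start = v}, (1 : ℚ) / ((p : G.EtP t).1.nval : ℚ)
        = ∑ᶠ q ∈ (Subtype.val : G.EtP t → GPath G) '' {p : G.EtP t | p.1.start = v},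
            (1 : ℚ) / (q.nval : ℚ) :=
          (finsum_mem_image (f := fun q : GPath G => (1 : ℚ) / (q.nval : ℚ)) hinj).symm
      _ = ∑ᶠ q ∈ (↑s : Set (GPath G)), (1 : ℚ) / (q.nval : ℚ) := by rw [himg]
      _ = ∑ q ∈ s, (1 : ℚ) / (q.nval : ℚ) := finsum_mem_coe_finset _ _
      _ = 1 := hsum
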